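/- Let A be a multiplicity-free linear operator on V with eigenvalues θ_0, …, θ_d and primitive idempotents E_0, …, E_d. Then for 0 ≤ i ≤ d, E_i = Σ_{j=i}^d (A − θ_0 I)(A − θ_1 I)⋯(A − θ_{j−1} I) / ((θ_i − θ_0)⋯(θ_i − θ_{i−1})(θ_i − θ_{i+1})⋯(θ_i − θ_j)). -/

import Mathlib

open Finset in
lemma aux_scalar {F : Type*} [Field F] (d i m : ℕ) (θ : ℕ → F)
    (hθ : ∀ i j, i ≤ d → j ≤ d → i ≠ j → θ i ≠ θ j)
    (hi : i ≤ d) (hm : m ≤ d) :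
    ∑ j ∈ Finset.Icc i d, (∏ k ∈ (Finset.range (j+1)).erase i, (θ i - θ k))⁻¹ *
      ∏ k ∈ Finset.range j, (θ m - θ k) = if m = i then 1 else 0 := by
  set D : ℕ → F := fun J => ∏ k ∈ (Finset.range (J+1)).erase i, (θ i - θ k) with hD
  set N : ℕ → F := fun J => ∏ k ∈ (Finset.range (J+1)).erase i, (θ m - θ k) with hN
  have hDne : ∀ J, J ≤ d → D J ≠ 0 := by
    intro J hJ
    rw [hD]
    apply Finset.prod_ne_zero_iff.mpr
    intro k hk
    rw [Finset.mem_erase, Finset.mem_range] at hk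
    exact sub_ne_zero.mpr (hθ i k hi (by omega) (Ne.symm hk.1))
  by_cases him : i ≤ m
  · -- telescoping
    have htel : ∀ J, i ≤ J → J ≤ d →
        ∑ j ∈ Finset.Icc i J, (D j)⁻¹ * ∏ k ∈ Finset.range j, (θ m - θ k)
          = (D J)⁻¹ * N J := by
      intro J hiJ
      induction J, hiJ using Nat.le_induction with
      | base =>
        intro _
        rw [Finset.Icc_self, Finset.sum_singleton]
        have : (Finset.range (i+1)).erase i = Finset.range i := by
          rw [Finset.range_add_one, Finset.erase_insert (by simp)]
        simp [hD, hN, this]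
      | succ J hiJ ih =>
        intro hJd
        have hJd' : J ≤ d := by omega
        rw [Finset.sum_Icc_succ_top (by omega), ih hJd']
        have hmem : (J+1) ∉ (Finset.range (J+1)).erase i := by simp
        have hsplit : (Finset.range (J+2)).erase i
            = insert (J+1) ((Finset.range (J+1)).erase i) := by
          rw [show J+2 = (J+1)+1 from rfl, Finset.range_add_one,
            Finset.erase_insert_of_ne (by omega)]
        have hDrec : D (J+1) = (θ i - θ (J+1)) * D J := by
          rw [hD]; simp only; rw [hsplit, Finset.prod_insert hmem]
        have hNrec : N (J+1) = (θ m - θ (J+1)) * N J := by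
          rw [hN]; simp only; rw [hsplit, Finset.prod_insert hmem]
        have hProd : ∏ k ∈ Finset.range (J+1), (θ m - θ k) = (θ m - θ i) * N J := by
          rw [hN]; simp only
          conv_lhs => rw [← Finset.insert_erase (Finset.mem_range.mpr (show i < J + 1 by omega))]
          rw [Finset.prod_insert (Finset.notMem_erase i _)]
        have h1 : D J ≠ 0 := hDne J hJd'
        have h2 : θ i - θ (J+1) ≠ 0 :=
          sub_ne_zero.mpr (hθ i (J+1) hi (by omega) (by omega))
        rw [hDrec, hNrec, hProd]
        field_simp
        ring
    -- split the sum
    have hsub : Finset.Icc i m ∪ Finset.Ioc m d = Finset.Icc i d := by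
      ext x; simp only [Finset.mem_union, Finset.mem_Icc, Finset.mem_Ioc]; omega
    rw [← hsub, Finset.sum_union (by
      rw [Finset.disjoint_left]; intro a ha hb
      rw [Finset.mem_Icc] at ha; rw [Finset.mem_Ioc] at hb; omega)]
    have hzero : ∑ j ∈ Finset.Ioc m d, (D j)⁻¹ * ∏ k ∈ Finset.range j, (θ m - θ k) = 0 := by
      apply Finset.sum_eq_zero
      intro j hj
      rw [Finset.mem_Ioc] at hj
      have : ∏ k ∈ Finset.range j, (θ m - θ k) = 0 :=
        Finset.prod_eq_zero (Finset.mem_range.mpr (show m < j by omega)) (by ring)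
      rw [this, mul_zero]
    rw [hzero, add_zero, htel m him hm]
    rcases eq_or_lt_of_le him with heq | hlt
    · subst heq
      simp only [if_pos rfl]
      have : N i = D i := by rw [hD, hN]
      rw [this, inv_mul_cancel₀ (hDne i hi)]; simp
    · rw [if_neg (by omega)]
      have : N m = 0 := by
        rw [hN]
        exact Finset.prod_eq_zero
          (Finset.mem_erase.mpr ⟨show m ≠ i by omega, Finset.mem_range.mpr (show m < m + 1 by omega)⟩)
          (by ring)
      rw [this, mul_zero]
  · rw [if_neg (by omega)]
    apply Finset.sum_eq_zero
    intro j hj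
    rw [Finset.mem_Icc] at hj
    have : ∏ k ∈ Finset.range j, (θ m - θ k) = 0 :=
      Finset.prod_eq_zero (Finset.mem_range.mpr (show m < j by omega)) (by ring)
    rw [this, mul_zero]


theorem stmt_11 {F V : Type*} [Field F] [AddCommGroup V] [Module F V]
    [FiniteDimensional F V] (d : ℕ) (hdim : Module.finrank F V = d + 1)
    (A : Module.End F V) (θ : ℕ → F)
    (hθ : ∀ i j, i ≤ d → j ≤ d → i ≠ j → θ i ≠ θ j)
    (E : ℕ → Module.End F V)
    (hEE : ∀ i j, i ≤ d → j ≤ d → E i * E j = if i = j then E i else 0)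
    (hsum : ∑ i ∈ Finset.range (d+1), E i = 1)
    (hAE : A = ∑ i ∈ Finset.range (d+1), θ i • E i)
    (hrank : ∀ i, i ≤ d → Module.finrank F (LinearMap.range (E i)) = 1) :
    ∀ i, i ≤ d →
      E i = ∑ j ∈ Finset.Icc i d,
        (∏ k ∈ (Finset.range (j+1)).erase i, (θ i - θ k))⁻¹ •
          Polynomial.aeval A (∏ k ∈ Finset.range j, (Polynomial.X - Polynomial.C (θ k))) := by
  have hpow : ∀ n : ℕ, A ^ n = ∑ m ∈ Finset.range (d+1), θ m ^ n • E m := by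
    intro n
    induction n with
    | zero => simpa [pow_zero] using hsum.symm
    | succ n ih =>
      calc A ^ (n+1) = (∑ m ∈ Finset.range (d+1), θ m ^ n • E m)
            * (∑ l ∈ Finset.range (d+1), θ l • E l) := by rw [pow_succ, ih, ← hAE]
        _ = ∑ m ∈ Finset.range (d+1), ∑ l ∈ Finset.range (d+1),
              (θ m ^ n * θ l) • (E m * E l) := by
            rw [Finset.sum_mul_sum]
            exact Finset.sum_congr rfl fun m _ => Finset.sum_congr rfl fun l _ => by
              rw [smul_mul_assoc, mul_smul_comm, smul_smul]
        _ = ∑ m ∈ Finset.range (d+1), θ m ^ (n+1) • E m := by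
            apply Finset.sum_congr rfl
            intro m hm
            rw [Finset.mem_range] at hm
            have h1 : ∀ l ∈ Finset.range (d+1),
                (θ m ^ n * θ l) • (E m * E l)
                  = if m = l then (θ m ^ n * θ l) • E m else 0 := by
              intro l hl
              rw [Finset.mem_range] at hl
              rw [hEE m l (by omega) (by omega)]
              split_ifs <;> simp
            rw [Finset.sum_congr rfl h1, Finset.sum_ite_eq,
              if_pos (Finset.mem_range.mpr (by omega)), ← pow_succ]
  have haeval : ∀ p : Polynomial F,
      Polynomial.aeval A p = ∑ m ∈ Finset.range (d+1), p.eval (θ m) • E m := by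
    intro p
    induction p using Polynomial.induction_on' with
    | add p q hp hq => simp [hp, hq, add_smul, Finset.sum_add_distrib]
    | monomial n a =>
      rw [Polynomial.aeval_monomial, hpow n, ← Algebra.smul_def, Finset.smul_sum]
      exact Finset.sum_congr rfl fun m _ => by
        rw [Polynomial.eval_monomial, smul_smul]
  intro i hi
  have hterm : ∀ j ∈ Finset.Icc i d,
      (∏ k ∈ (Finset.range (j+1)).erase i, (θ i - θ k))⁻¹ •
          Polynomial.aeval A (∏ k ∈ Finset.range j, (Polynomial.X - Polynomial.C (θ k)))
        = ∑ m ∈ Finset.range (d+1),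
            ((∏ k ∈ (Finset.range (j+1)).erase i, (θ i - θ k))⁻¹ *
              ∏ k ∈ Finset.range j, (θ m - θ k)) • E m := by
    intro j hj
    rw [haeval, Finset.smul_sum]
    refine Finset.sum_congr rfl fun m _ => ?_
    rw [smul_smul, Polynomial.eval_prod]
    simp [Polynomial.eval_sub]
  rw [Finset.sum_congr rfl hterm, Finset.sum_comm]
  rw [Finset.sum_congr rfl (fun m _ => (Finset.sum_smul).symm)]
  have : ∀ m ∈ Finset.range (d+1),
      (∑ j ∈ Finset.Icc i d, (∏ k ∈ (Finset.range (j+1)).erase i, (θ i - θ k))⁻¹ *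
        ∏ k ∈ Finset.range j, (θ m - θ k)) • E m
        = if m = i then E m else 0 := by
    intro m hm
    rw [Finset.mem_range] at hm
    rw [aux_scalar d i m θ hθ hi (by omega)]
    split_ifs <;> simp
  rw [Finset.sum_congr rfl this, Finset.sum_ite_eq',
    if_pos (Finset.mem_range.mpr (by omega))]
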